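/- Let F be a finite field with q elements, m ≥ 0 and 0 ≤ d ≤ m. Define a_0 = 1 and a_n = ∏_{i=1}^{n}(q^i − 1). Then the number of d-dimensional subspaces of F^m equals a_m / (a_d · a_{m−d}); equivalently, (number of d-dimensional subspaces of F^m) · a_d · a_{m−d} = a_m. -/

import Mathlib

open Module Submodule

variable {F : Type} [Field F] [Fintype F]

noncomputable def fiberEquiv {V : Type} [AddCommGroup V] [Module F V] [FiniteDimensional F V]
    (d : ℕ) (U : Submodule F V) (hU : finrank F U = d) :
    {s : {s : Fin d → V // LinearIndependent F s} // Submodule.span F (Set.range s.1) = U} ≃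
      {t : Fin d → U // LinearIndependent F t} where
  toFun s := ⟨fun i => ⟨s.1.1 i, by
      have h := subset_span (R := F) (Set.mem_range_self (f := s.1.1) i)
      rwa [s.2] at h⟩,
    LinearIndependent.of_comp U.subtype (by exact s.1.2)⟩
  invFun t := ⟨⟨fun i => (t.1 i : V), t.2.map' U.subtype (ker_subtype U)⟩, by
    have hb : Submodule.span F (Set.range t.1) = ⊤ := by
      apply Submodule.eq_top_of_finrank_eq
      rw [finrank_span_eq_card t.2, Fintype.card_fin, hU]
    have : Set.range (fun i => (t.1 i : V)) = U.subtype '' Set.range t.1 := by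
      rw [← Set.range_comp]; rfl
    rw [this, Submodule.span_image, hb, Submodule.map_subtype_top]⟩
  left_inv s := Subtype.ext (Subtype.ext (funext fun i => rfl))
  right_inv t := Subtype.ext (funext fun i => Subtype.ext rfl)

theorem count_key (q m d : ℕ) (hq : q = Fintype.card F) (hd : d ≤ m) :
    Nat.card {U : Submodule F (Fin m → F) // finrank F U = d} *
      ∏ i ∈ Finset.range d, (q ^ d - q ^ i) =
    ∏ i ∈ Finset.range d, (q ^ m - q ^ i) := by
  classical
  subst hq
  rw [Finset.prod_range (fun i => Fintype.card F ^ d - Fintype.card F ^ i),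
    Finset.prod_range (fun i => Fintype.card F ^ m - Fintype.card F ^ i)]
  set V := (Fin m → F)
  have hVfin : finrank F V = m := by
    simp [V, Module.finrank_fintype_fun_eq_card]
  have hrhs : Nat.card {s : Fin d → V // LinearIndependent F s} =
      ∏ i : Fin d, (Fintype.card F ^ m - Fintype.card F ^ i.val) := by
    have := card_linearIndependent (K := F) (V := V) (k := d) (by rw [hVfin]; exact hd)
    rwa [hVfin] at this
  rw [← hrhs]
  -- sigma decomposition
  have hfin : Finite {s : Fin d → V // LinearIndependent F s} := inferInstance
  let f : {s : Fin d → V // LinearIndependent F s} →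
      {U : Submodule F V // finrank F U = d} :=
    fun s => ⟨Submodule.span F (Set.range s.1), by
      rw [finrank_span_eq_card s.2, Fintype.card_fin]⟩
  have e1 : (Σ U : {U : Submodule F V // finrank F U = d}, {s // f s = U}) ≃
      {s : Fin d → V // LinearIndependent F s} := Equiv.sigmaFiberEquiv f
  rw [← Nat.card_congr e1]
  have := Fintype.ofFinite {U : Submodule F V // finrank F U = d}
  have fibcard : ∀ U : {U : Submodule F V // finrank F U = d},
      Nat.card {s // f s = U} = ∏ i : Fin d, (Fintype.card F ^ d - Fintype.card F ^ i.val) := by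
    intro U
    have e2 : {s // f s = U} ≃ {t : Fin d → U.1 // LinearIndependent F t} := by
      refine (Equiv.subtypeEquivRight ?_).trans (fiberEquiv d U.1 U.2)
      intro s; constructor
      · intro h; exact congrArg Subtype.val h
      · intro h; exact Subtype.ext h
    rw [Nat.card_congr e2]
    have := card_linearIndependent (K := F) (V := U.1) (k := d) (by rw [U.2])
    rwa [U.2] at this
  have : Nat.card (Σ U : {U : Submodule F V // finrank F U = d}, {s // f s = U}) =
      ∑ U : {U : Submodule F V // finrank F U = d}, Nat.card {s // f s = U} := by
    simp only [Nat.card_eq_fintype_card, Fintype.card_sigma]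
  rw [this, Finset.sum_congr rfl (fun U _ => fibcard U), Finset.sum_const,
    Finset.card_univ, smul_eq_mul, Nat.card_eq_fintype_card]

theorem prodA (q k d : ℕ) (hq : 1 ≤ q) (hd : d ≤ k) :
    ∏ i ∈ Finset.range d, (q ^ k - q ^ i) =
      q ^ (∑ i ∈ Finset.range d, i) * ∏ i ∈ Finset.range d, (q ^ (k - i) - 1) := by
  rw [← Finset.prod_pow_eq_pow_sum, ← Finset.prod_mul_distrib]
  refine Finset.prod_congr rfl fun i hi => ?_
  have hik : i ≤ k := le_trans (le_of_lt (Finset.mem_range.mp hi)) hd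
  rw [Nat.mul_sub, mul_one, ← pow_add, Nat.add_sub_cancel' hik]

theorem prodB (q d : ℕ) :
    ∏ i ∈ Finset.range d, (q ^ (d - i) - 1) = ∏ i ∈ Finset.range d, (q ^ (i + 1) - 1) := by
  rw [← Finset.prod_range_reflect (fun i => q ^ (i + 1) - 1) d]
  refine Finset.prod_congr rfl fun i hi => ?_
  have := Finset.mem_range.mp hi
  congr 2
  omega

theorem prodC (q m d : ℕ) (hd : d ≤ m) :
    (∏ i ∈ Finset.range d, (q ^ (m - i) - 1)) * ∏ i ∈ Finset.range (m - d), (q ^ (i + 1) - 1) =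
      ∏ i ∈ Finset.range m, (q ^ (i + 1) - 1) := by
  conv_rhs => rw [show m = (m - d) + d by omega,
    Finset.prod_range_add (fun i => q ^ (i + 1) - 1) (m - d) d]
  rw [mul_comm]
  congr 1
  rw [← Finset.prod_range_reflect (fun i => q ^ (m - d + i + 1) - 1) d]
  refine Finset.prod_congr rfl fun i hi => ?_
  have := Finset.mem_range.mp hi
  congr 2
  omega

open Module in
/-- with `a n = ∏_{i=1}^n (q^i - 1)`, the number of `d`-dimensional subspaces
of `F^m` satisfies `(number) * (a d * a (m-d)) = a m`. -/
theorem card_subspaces_of_dim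
    {F : Type} [Field F] [Fintype F] (q : ℕ) (hq : q = Fintype.card F)
    (m d : ℕ) (hd : d ≤ m) :
    Nat.card {U : Submodule F (Fin m → F) // finrank F U = d} *
        ((∏ i ∈ Finset.range d, (q ^ (i + 1) - 1)) *
          (∏ i ∈ Finset.range (m - d), (q ^ (i + 1) - 1))) =
      ∏ i ∈ Finset.range m, (q ^ (i + 1) - 1) := by
  subst hq
  set q := Fintype.card F with hq
  have hq1 : 1 ≤ q := Fintype.card_pos
  have key := count_key (F := F) q m d rfl hd
  rw [prodA q d d hq1 le_rfl, prodA q m d hq1 hd, prodB] at key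
  set e := ∑ i ∈ Finset.range d, i
  set N := Nat.card {U : Submodule F (Fin m → F) // finrank F U = d}
  apply Nat.eq_of_mul_eq_mul_right (Nat.pow_pos hq1 : 0 < q ^ e)
  calc N * ((∏ i ∈ Finset.range d, (q ^ (i + 1) - 1)) *
        ∏ i ∈ Finset.range (m - d), (q ^ (i + 1) - 1)) * q ^ e
      = (N * (q ^ e * ∏ i ∈ Finset.range d, (q ^ (i + 1) - 1))) *
        ∏ i ∈ Finset.range (m - d), (q ^ (i + 1) - 1) := by ring
    _ = (q ^ e * ∏ i ∈ Finset.range d, (q ^ (m - i) - 1)) *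
        ∏ i ∈ Finset.range (m - d), (q ^ (i + 1) - 1) := by rw [key]
    _ = (∏ i ∈ Finset.range m, (q ^ (i + 1) - 1)) * q ^ e := by
        rw [mul_assoc, prodC q m d hd]; ring
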